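/- arXiv:1704.00931 — 2 statements merged into one kernel-verified Lean document; each statement's English description precedes it below -/
import Mathlib

section
/- Let f : [0,1] → ℝ be nondecreasing with f(1) − f(0) ≤ 1. For each m, the set of z ∈ [0,1] such that every dyadic interval of length 2^{-n} containing z (for every n ≥ m) has slope S_f > 2^m has Lebesgue measure at most 2^{-m}. Consequently, the set of z with lower pseudo-derivative +∞ has measure zero. -/
open MeasureTheory Set

noncomputable def stmt13BadIdx (f : ℝ → ℝ) (m n : ℕ) : Finset ℕ :=
  @Finset.filter _
    (fun i => (2:ℝ) ^ m < 2 ^ n * (f (((i:ℝ) + 1) / 2 ^ n) - f ((i:ℝ) / 2 ^ n)))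
    (Classical.decPred _) (Finset.range (2 ^ n))

noncomputable def stmt13BadSet (f : ℝ → ℝ) (m n : ℕ) : Set ℝ :=
  ⋃ i ∈ stmt13BadIdx f m n, Icc ((i:ℝ) / 2 ^ n) (((i:ℝ) + 1) / 2 ^ n)

lemma stmt13_mem_badSet {f : ℝ → ℝ} {m n : ℕ} {z : ℝ} {i : ℕ} (hi : i + 1 ≤ 2 ^ n)
    (hz : z ∈ Icc ((i:ℝ) / 2 ^ n) (((i:ℝ) + 1) / 2 ^ n))
    (hs : (2:ℝ) ^ m < 2 ^ n * (f (((i:ℝ) + 1) / 2 ^ n) - f ((i:ℝ) / 2 ^ n))) :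
    z ∈ stmt13BadSet f m n := by
  have hmemIdx : i ∈ stmt13BadIdx f m n := by
    unfold stmt13BadIdx
    rw [Finset.mem_filter, Finset.mem_range]
    exact ⟨by omega, hs⟩
  exact Set.mem_biUnion hmemIdx hz

lemma stmt13_vol_badSet {f : ℝ → ℝ} (hmono : MonotoneOn f (Set.Icc 0 1))
    (hbd : f 1 - f 0 ≤ 1) (m n : ℕ) :
    volume (stmt13BadSet f m n) ≤ ENNReal.ofReal ((2:ℝ) ^ (-(m:ℤ))) := by
  have h2n : (0:ℝ) < 2 ^ n := by positivity
  have h2m : (0:ℝ) < 2 ^ m := by positivity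
  -- endpoints of dyadic intervals lie in [0,1]
  have hmem : ∀ i : ℕ, i < 2 ^ n → ((i:ℝ) / 2 ^ n) ∈ Icc (0:ℝ) 1 ∧
      (((i:ℝ) + 1) / 2 ^ n) ∈ Icc (0:ℝ) 1 := by
    intro i hi
    have h1 : (i:ℝ) + 1 ≤ 2 ^ n := by
      have h' : (i + 1 : ℕ) ≤ 2 ^ n := hi
      have : ((i + 1 : ℕ) : ℝ) ≤ ((2 ^ n : ℕ) : ℝ) := Nat.cast_le.2 h'
      push_cast at this; linarith
    constructor
    · constructor
      · positivity
      · rw [div_le_one h2n]; linarith [Nat.cast_nonneg (α := ℝ) i]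
    · constructor
      · positivity
      · rw [div_le_one h2n]; linarith
  -- each term of the telescoping sum is nonnegative
  have hnonneg : ∀ i ∈ Finset.range (2 ^ n),
      0 ≤ f (((i:ℝ) + 1) / 2 ^ n) - f ((i:ℝ) / 2 ^ n) := by
    intro i hi
    rw [Finset.mem_range] at hi
    obtain ⟨ha, hb⟩ := hmem i hi
    have hle : (i:ℝ) / 2 ^ n ≤ ((i:ℝ) + 1) / 2 ^ n := by
      apply div_le_div_of_nonneg_right ?_ h2n.le
      linarith
    have := hmono ha hb hle
    linarith [this]
  -- telescoping sum
  have htel : ∑ i ∈ Finset.range (2 ^ n),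
      (f (((i:ℝ) + 1) / 2 ^ n) - f ((i:ℝ) / 2 ^ n)) = f 1 - f 0 := by
    have := Finset.sum_range_sub (fun i : ℕ => f ((i:ℝ) / 2 ^ n)) (2 ^ n)
    have heq : ∀ i : ℕ, f (((i:ℝ) + 1) / 2 ^ n) = f (((i + 1 : ℕ) : ℝ) / 2 ^ n) := by
      intro i; push_cast; ring_nf
    calc ∑ i ∈ Finset.range (2 ^ n), (f (((i:ℝ) + 1) / 2 ^ n) - f ((i:ℝ) / 2 ^ n))
        = ∑ i ∈ Finset.range (2 ^ n), (f (((i + 1 : ℕ) : ℝ) / 2 ^ n) - f ((i:ℝ) / 2 ^ n)) := by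
          refine Finset.sum_congr rfl fun i _ => by rw [heq]
      _ = f (((2 ^ n : ℕ) : ℝ) / 2 ^ n) - f (((0 : ℕ) : ℝ) / 2 ^ n) := this
      _ = f 1 - f 0 := by
          push_cast
          rw [div_self (ne_of_gt h2n), zero_div]
  -- sum over bad indices bounded by 1
  have hsub : stmt13BadIdx f m n ⊆ Finset.range (2 ^ n) := Finset.filter_subset _ _
  have hsum_le : ∑ i ∈ stmt13BadIdx f m n,
      (f (((i:ℝ) + 1) / 2 ^ n) - f ((i:ℝ) / 2 ^ n)) ≤ 1 := by
    calc ∑ i ∈ stmt13BadIdx f m n, (f (((i:ℝ) + 1) / 2 ^ n) - f ((i:ℝ) / 2 ^ n))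
        ≤ ∑ i ∈ Finset.range (2 ^ n), (f (((i:ℝ) + 1) / 2 ^ n) - f ((i:ℝ) / 2 ^ n)) :=
          Finset.sum_le_sum_of_subset_of_nonneg hsub (fun i hi _ => hnonneg i hi)
      _ = f 1 - f 0 := htel
      _ ≤ 1 := hbd
  -- each bad term exceeds 2^m / 2^n
  have hcard : ((stmt13BadIdx f m n).card : ℝ) * (2 ^ m / 2 ^ n) ≤ 1 := by
    have := Finset.card_nsmul_le_sum (stmt13BadIdx f m n)
      (fun i => f (((i:ℝ) + 1) / 2 ^ n) - f ((i:ℝ) / 2 ^ n)) (2 ^ m / 2 ^ n)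
      (fun i hi => by
        simp only [stmt13BadIdx, Finset.mem_filter] at hi
        rw [div_le_iff₀ h2n, mul_comm]
        exact le_of_lt hi.2)
    rw [nsmul_eq_mul] at this
    linarith
  have hcard' : ((stmt13BadIdx f m n).card : ℝ) * (1 / 2 ^ n) ≤ (2:ℝ) ^ (-(m:ℤ)) := by
    rw [mul_div_assoc'] at hcard
    have h1 : ((stmt13BadIdx f m n).card : ℝ) * 2 ^ m ≤ 2 ^ n := by
      rw [div_le_one h2n] at hcard; exact hcard
    rw [zpow_neg, zpow_natCast, ← one_div, mul_one_div, div_le_div_iff₀ h2n h2m]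
    linarith
  calc volume (stmt13BadSet f m n)
      ≤ ∑ i ∈ stmt13BadIdx f m n, volume (Icc ((i:ℝ) / 2 ^ n) (((i:ℝ) + 1) / 2 ^ n)) :=
        measure_biUnion_finset_le _ _
    _ = ∑ i ∈ stmt13BadIdx f m n, ENNReal.ofReal (1 / 2 ^ n) := by
        refine Finset.sum_congr rfl fun i _ => ?_
        rw [Real.volume_Icc]
        congr 1; ring
    _ = (stmt13BadIdx f m n).card • ENNReal.ofReal (1 / 2 ^ n) := by
        rw [Finset.sum_const]
    _ = ENNReal.ofReal (((stmt13BadIdx f m n).card : ℝ) * (1 / 2 ^ n)) := by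
        rw [nsmul_eq_mul, ← ENNReal.ofReal_natCast, ← ENNReal.ofReal_mul (by positivity)]
    _ ≤ ENNReal.ofReal ((2:ℝ) ^ (-(m:ℤ))) := ENNReal.ofReal_le_ofReal hcard'

lemma stmt13_exists_idx {z : ℝ} (hz : z ∈ Icc (0:ℝ) 1) (n : ℕ) :
    ∃ i : ℕ, i + 1 ≤ 2 ^ n ∧ (i:ℝ) / 2 ^ n ≤ z ∧ z ≤ ((i:ℝ) + 1) / 2 ^ n := by
  have h2n : (0:ℝ) < 2 ^ n := by positivity
  have hp : 1 ≤ 2 ^ n := Nat.one_le_two_pow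
  obtain ⟨hz0, hz1⟩ := hz
  have hzn : 0 ≤ z * 2 ^ n := by positivity
  by_cases h : ⌊z * 2 ^ n⌋₊ + 1 ≤ 2 ^ n
  · refine ⟨⌊z * 2 ^ n⌋₊, h, ?_, ?_⟩
    · rw [div_le_iff₀ h2n]
      exact Nat.floor_le hzn
    · rw [le_div_iff₀ h2n]
      exact le_of_lt (Nat.lt_floor_add_one _)
  · -- then z * 2^n ≥ 2^n, so z = 1
    have h1 : (2:ℕ) ^ n ≤ ⌊z * 2 ^ n⌋₊ := by omega
    have hcsub : ((2 ^ n - 1 : ℕ) : ℝ) = ((2 ^ n : ℕ) : ℝ) - 1 := by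
      rw [Nat.cast_sub hp]; push_cast; ring
    refine ⟨2 ^ n - 1, by omega, ?_, ?_⟩
    · rw [div_le_iff₀ h2n]
      have hle : (2 ^ n - 1 : ℕ) ≤ ⌊z * 2 ^ n⌋₊ := by omega
      have : ((2 ^ n - 1 : ℕ) : ℝ) ≤ (⌊z * 2 ^ n⌋₊ : ℝ) := Nat.cast_le.2 hle
      calc ((2 ^ n - 1 : ℕ) : ℝ) ≤ (⌊z * 2 ^ n⌋₊ : ℝ) := this
        _ ≤ z * 2 ^ n := Nat.floor_le hzn
    · rw [le_div_iff₀ h2n]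
      have hc : ((2 ^ n - 1 : ℕ) : ℝ) + 1 = 2 ^ n := by rw [hcsub]; push_cast; ring
      rw [hc]
      nlinarith

theorem stmt13 (f : ℝ → ℝ) (hmono : MonotoneOn f (Set.Icc 0 1)) (hbd : f 1 - f 0 ≤ 1) :
    (∀ m : ℕ,
      MeasureTheory.volume {z ∈ Set.Icc (0:ℝ) 1 | ∀ n ≥ m, ∀ i : ℕ, i + 1 ≤ 2 ^ n →
          z ∈ Set.Icc ((i:ℝ) / 2 ^ n) (((i:ℝ) + 1) / 2 ^ n) →
          (2:ℝ) ^ m < 2 ^ n * (f (((i:ℝ) + 1) / 2 ^ n) - f ((i:ℝ) / 2 ^ n))}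
        ≤ ENNReal.ofReal ((2:ℝ) ^ (-(m:ℤ)))) ∧
    MeasureTheory.volume {z ∈ Set.Icc (0:ℝ) 1 | ∀ K : ℝ, ∃ δ > (0:ℝ), ∀ a b : ℚ,
        0 ≤ (a:ℝ) → (b:ℝ) ≤ 1 → (a:ℝ) ≤ z → z ≤ (b:ℝ) →
        0 < (b:ℝ) - (a:ℝ) → (b:ℝ) - (a:ℝ) < δ →
        K < (f (b:ℝ) - f (a:ℝ)) / ((b:ℝ) - (a:ℝ))} = 0 := by
  constructor
  · -- Part 1: the set is contained in stmt13BadSet f m m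
    intro m
    refine le_trans (measure_mono ?_) (stmt13_vol_badSet hmono hbd m m)
    rintro z ⟨hz, hP⟩
    obtain ⟨i, hi1, hi2, hi3⟩ := stmt13_exists_idx hz m
    exact stmt13_mem_badSet hi1 ⟨hi2, hi3⟩ (hP m le_rfl i hi1 ⟨hi2, hi3⟩)
  · -- Part 2
    set F := {z ∈ Set.Icc (0:ℝ) 1 | ∀ K : ℝ, ∃ δ > (0:ℝ), ∀ a b : ℚ,
        0 ≤ (a:ℝ) → (b:ℝ) ≤ 1 → (a:ℝ) ≤ z → z ≤ (b:ℝ) →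
        0 < (b:ℝ) - (a:ℝ) → (b:ℝ) - (a:ℝ) < δ →
        K < (f (b:ℝ) - f (a:ℝ)) / ((b:ℝ) - (a:ℝ))} with hF
    have key : ∀ m : ℕ, volume F ≤ ENNReal.ofReal ((2:ℝ) ^ (-(m:ℤ))) := by
      intro m
      set C : ℕ → Set ℝ := fun N => ⋂ n, ⋂ (_ : N ≤ n), stmt13BadSet f m n with hC
      have hCmono : Monotone C := by
        intro N N' hNN'
        exact Set.iInter₂_mono' fun n hn => ⟨n, le_trans hNN' hn, subset_rfl⟩
      have hFsub : F ⊆ ⋃ N, C N := by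
        rintro z ⟨hz, hP⟩
        obtain ⟨δ, hδ, hslope⟩ := hP ((2:ℝ) ^ m)
        obtain ⟨N, hN⟩ := exists_pow_lt_of_lt_one hδ (by norm_num : (1:ℝ)/2 < 1)
        refine Set.mem_iUnion.2 ⟨N, ?_⟩
        simp only [hC, Set.mem_iInter]
        intro n hn
        obtain ⟨i, hi1, hi2, hi3⟩ := stmt13_exists_idx hz n
        have h2n : (0:ℝ) < 2 ^ n := by positivity
        have hac : (((i : ℚ) / 2 ^ n : ℚ) : ℝ) = (i:ℝ) / 2 ^ n := by push_cast; ring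
        have hbc : ((((i : ℚ) + 1) / 2 ^ n : ℚ) : ℝ) = ((i:ℝ) + 1) / 2 ^ n := by
          push_cast; ring
        set a : ℚ := (i : ℚ) / 2 ^ n
        set b : ℚ := ((i : ℚ) + 1) / 2 ^ n
        have hi1' : (i:ℝ) + 1 ≤ 2 ^ n := by
          have : ((i + 1 : ℕ) : ℝ) ≤ ((2 ^ n : ℕ) : ℝ) := by exact_mod_cast Nat.cast_le.2 hi1
          push_cast at this; linarith
        have hba : ((b:ℚ):ℝ) - ((a:ℚ):ℝ) = 1 / 2 ^ n := by rw [hac, hbc]; ring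
        have hsl := hslope a b (by rw [hac]; positivity)
          (by rw [hbc, div_le_one h2n]; exact hi1')
          (by rw [hac]; exact hi2) (by rw [hbc]; exact hi3)
          (by rw [hba]; positivity)
          (by
            rw [hba]
            calc (1:ℝ) / 2 ^ n ≤ 1 / 2 ^ N := by
                  apply div_le_div_of_nonneg_left (by norm_num) (by positivity)
                  exact pow_le_pow_right₀ (by norm_num) hn
              _ < δ := by
                  have : ((1:ℝ)/2) ^ N = 1 / 2 ^ N := by rw [div_pow, one_pow]
                  linarith [hN, this ▸ hN])
        rw [hba] at hsl
        rw [div_div_eq_mul_div, div_one] at hsl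
        refine stmt13_mem_badSet hi1 ⟨hi2, hi3⟩ ?_
        rw [hac, hbc] at hsl
        linarith [hsl]
      calc volume F ≤ volume (⋃ N, C N) := measure_mono hFsub
        _ = ⨆ N, volume (C N) := hCmono.directed_le.measure_iUnion
        _ ≤ ENNReal.ofReal ((2:ℝ) ^ (-(m:ℤ))) := by
            refine iSup_le fun N => ?_
            refine le_trans (measure_mono ?_) (stmt13_vol_badSet hmono hbd m N)
            exact Set.iInter₂_subset N le_rfl
    -- conclude: volume F ≤ 0
    refine le_antisymm ?_ zero_le
    refine ge_of_tendsto' (f := fun m : ℕ => ENNReal.ofReal ((2:ℝ) ^ (-(m:ℤ)))) (x := Filter.atTop) ?_ key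
    have hreal : Filter.Tendsto (fun m : ℕ => (2:ℝ) ^ (-(m:ℤ))) Filter.atTop (nhds 0) := by
      have : (fun m : ℕ => (2:ℝ) ^ (-(m:ℤ))) = fun m : ℕ => ((1:ℝ)/2) ^ m := by
        funext m; rw [zpow_neg, zpow_natCast, div_pow, one_pow, one_div]
      rw [this]
      exact tendsto_pow_atTop_nhds_zero_of_lt_one (by norm_num) (by norm_num)
    have := (ENNReal.continuous_ofReal.tendsto 0).comp hreal
    simpa only [ENNReal.ofReal_zero, Function.comp_def] using this
end

section
/- Let f : [0,1] → ℝ be nondecreasing, let 0 < γ < β be rationals, and for a fixed scheme of intervals consider nested alternating sequences A_0 ⊇ A_1 ⊇ ... ⊇ A_{2n} of intervals with S_f(A_{2i}) < γ and S_f(A_{2i+1}) > β, where within each parity class any two intervals are either disjoint or nested. Then the union of all final intervals A_{2n} of n-depth alternating sequences has outer measure at most (γ/β)^n. -/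
/-- The slope of `f` over the interval coded by the pair `p`. -/
noncomputable def slopeOf (f : ℝ → ℝ) (p : ℝ × ℝ) : ℝ := (f p.2 - f p.1) / (p.2 - p.1)


open Set MeasureTheory
open scoped Classical

namespace Stmt14Aux

lemma disj_order {p q : ℝ × ℝ} (hp : p.1 < p.2) (hq : q.1 < q.2)
    (h : Disjoint (Ioo p.1 p.2) (Ioo q.1 q.2)) : p.2 ≤ q.1 ∨ q.2 ≤ p.1 := by
  rw [Set.Ioo_disjoint_Ioo] at h
  by_contra hc
  push_neg at hc
  rcases le_max_iff.1 h with h1 | h1 <;> rcases min_le_iff.1 (le_refl (min p.2 q.2)) with _ | _ <;>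
    simp only [min_le_iff] at h1 <;>
    rcases h1 with h2 | h2 <;> linarith [hc.1, hc.2]

lemma subset_iff {p q : ℝ × ℝ} (hp : p.1 < p.2) :
    Icc p.1 p.2 ⊆ Icc q.1 q.2 ↔ q.1 ≤ p.1 ∧ p.2 ≤ q.2 := Set.Icc_subset_Icc_iff hp.le

lemma sum_incr (f : ℝ → ℝ) (hf : MonotoneOn f (Set.Icc 0 1)) :
    ∀ F : Finset (ℝ × ℝ), ∀ c d : ℝ, 0 ≤ c → d ≤ 1 → c ≤ d →
      (∀ p ∈ F, c ≤ p.1 ∧ p.1 < p.2 ∧ p.2 ≤ d) →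
      (∀ p ∈ F, ∀ q ∈ F, p ≠ q → p.2 ≤ q.1 ∨ q.2 ≤ p.1) →
      ∑ p ∈ F, (f p.2 - f p.1) ≤ f d - f c := by
  intro F
  induction F using Finset.strongInduction with
  | _ F ih =>
    intro c d hc hd hcd hmem hdisj
    rcases F.eq_empty_or_nonempty with rfl | hne
    · simp only [Finset.sum_empty, sub_nonneg]
      exact hf ⟨hc, hcd.trans hd⟩ ⟨hc.trans hcd, hd⟩ hcd
    · obtain ⟨p0, hp0, hmax⟩ := F.exists_max_image (fun p => p.1) hne
      obtain ⟨h01, h02, h03⟩ := hmem p0 hp0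
      have key : ∀ q ∈ F.erase p0, c ≤ q.1 ∧ q.1 < q.2 ∧ q.2 ≤ p0.1 := by
        intro q hq
        have hqF := Finset.mem_of_mem_erase hq
        have hne' := Finset.ne_of_mem_erase hq
        obtain ⟨hq1, hq2, hq3⟩ := hmem q hqF
        refine ⟨hq1, hq2, ?_⟩
        rcases hdisj q hqF p0 hp0 hne' with h | h
        · exact h
        · exfalso; have := hmax q hqF; linarith
      have h1 : ∑ p ∈ F.erase p0, (f p.2 - f p.1) ≤ f p0.1 - f c := by
        refine ih (F.erase p0) (Finset.erase_ssubset hp0) c p0.1 hc (by linarith) h01 key ?_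
        intro p hp q hq hpq
        exact hdisj p (Finset.mem_of_mem_erase hp) q (Finset.mem_of_mem_erase hq) hpq
      have h2 : f p0.2 ≤ f d := by
        apply hf ⟨by linarith, by linarith⟩ ⟨by linarith, hd⟩ h03
      have h3 : ∑ p ∈ F, (f p.2 - f p.1)
          = ∑ p ∈ F.erase p0, (f p.2 - f p.1) + (f p0.2 - f p0.1) := by
        rw [Finset.sum_erase_add _ _ hp0]
      linarith

lemma exists_maximal_above (G : Finset (ℝ × ℝ)) (hG : ∀ p ∈ G, p.1 < p.2)
    {q : ℝ × ℝ} (hq : q ∈ G) :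
    ∃ m ∈ G, Icc q.1 q.2 ⊆ Icc m.1 m.2 ∧ ∀ r ∈ G, Icc m.1 m.2 ⊆ Icc r.1 r.2 → r = m := by
  classical
  set s := G.filter (fun r => Icc q.1 q.2 ⊆ Icc r.1 r.2) with hs
  have hqs : q ∈ s := by simp [hs, hq]
  obtain ⟨m, hm, hmax⟩ := s.exists_max_image (fun r => r.2 - r.1) ⟨q, hqs⟩
  rw [hs, Finset.mem_filter] at hm
  refine ⟨m, hm.1, hm.2, ?_⟩
  intro r hr hsub
  have hrs : r ∈ s := by
    rw [hs, Finset.mem_filter]; exact ⟨hr, hm.2.trans hsub⟩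
  have h1 := hmax r hrs
  have hm2 := hG m hm.1
  have hr2 := hG r hr
  rw [subset_iff hm2] at hsub
  have e1 : r.1 = m.1 := by linarith
  have e2 : r.2 = m.2 := by linarith
  exact Prod.ext e1 e2

lemma within_bound (f : ℝ → ℝ) (hf : MonotoneOn f (Set.Icc 0 1)) {β : ℝ} (hβ : 0 < β)
    (F : Finset (ℝ × ℝ)) {m : ℝ × ℝ}
    (hm1 : 0 ≤ m.1) (hm2 : m.1 < m.2) (hm3 : m.2 ≤ 1)
    (hmem : ∀ p ∈ F, m.1 ≤ p.1 ∧ p.1 < p.2 ∧ p.2 ≤ m.2)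
    (hd : ∀ p ∈ F, ∀ q ∈ F, Icc p.1 p.2 ⊆ Icc q.1 q.2 ∨ Icc q.1 q.2 ⊆ Icc p.1 p.2 ∨
      Disjoint (Ioo p.1 p.2) (Ioo q.1 q.2))
    (hβs : ∀ p ∈ F, β * (p.2 - p.1) < f p.2 - f p.1) :
    volume (⋃ p ∈ F, Icc p.1 p.2) ≤ ENNReal.ofReal ((f m.2 - f m.1) / β) := by
  set N := F.filter (fun p => ∀ r ∈ F, Icc p.1 p.2 ⊆ Icc r.1 r.2 → r = p) with hN
  have hNF : N ⊆ F := Finset.filter_subset _ _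
  have hFlt : ∀ p ∈ F, p.1 < p.2 := fun p hp => (hmem p hp).2.1
  have hcover : (⋃ p ∈ F, Icc p.1 p.2) ⊆ ⋃ p ∈ N, Icc p.1 p.2 := by
    intro x hx
    simp only [mem_iUnion, exists_prop] at hx ⊢
    obtain ⟨p, hp, hx⟩ := hx
    obtain ⟨q, hqF, hsub, hqmax⟩ := exists_maximal_above F hFlt hp
    refine ⟨q, ?_, hsub hx⟩
    rw [hN, Finset.mem_filter]
    exact ⟨hqF, hqmax⟩
  have hdisjN : ∀ p ∈ N, ∀ q ∈ N, p ≠ q → p.2 ≤ q.1 ∨ q.2 ≤ p.1 := by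
    intro p hp q hq hpq
    have hpm : ∀ r ∈ F, Icc p.1 p.2 ⊆ Icc r.1 r.2 → r = p := (Finset.mem_filter.1 hp).2
    have hqm : ∀ r ∈ F, Icc q.1 q.2 ⊆ Icc r.1 r.2 → r = q := (Finset.mem_filter.1 hq).2
    rcases hd p (hNF hp) q (hNF hq) with h | h | h
    · exact absurd (hpm q (hNF hq) h) (by exact fun e => hpq e.symm)
    · exact absurd (hqm p (hNF hp) h) hpq
    · exact disj_order (hFlt p (hNF hp)) (hFlt q (hNF hq)) h
  have hreal : ∑ p ∈ N, (p.2 - p.1) ≤ (f m.2 - f m.1) / β := by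
    have h1 : ∑ p ∈ N, (p.2 - p.1) ≤ ∑ p ∈ N, (f p.2 - f p.1) / β := by
      refine Finset.sum_le_sum fun p hp => ?_
      rw [le_div_iff₀ hβ]
      rw [mul_comm]
      exact (hβs p (hNF hp)).le
    have h2 : ∑ p ∈ N, (f p.2 - f p.1) / β ≤ (f m.2 - f m.1) / β := by
      rw [← Finset.sum_div]
      refine (div_le_div_iff_of_pos_right hβ).2 ?_
      exact sum_incr f hf N m.1 m.2 hm1 hm3 hm2.le (fun p hp => hmem p (hNF hp)) hdisjN
    exact h1.trans h2
  calc volume (⋃ p ∈ F, Icc p.1 p.2) ≤ volume (⋃ p ∈ N, Icc p.1 p.2) := measure_mono hcover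
    _ ≤ ∑ p ∈ N, volume (Icc p.1 p.2) := measure_biUnion_finset_le _ _
    _ = ∑ p ∈ N, ENNReal.ofReal (p.2 - p.1) := by simp [Real.volume_Icc]
    _ = ENNReal.ofReal (∑ p ∈ N, (p.2 - p.1)) := by
        rw [ENNReal.ofReal_sum_of_nonneg]
        intro p hp
        have := hFlt p (hNF hp); linarith
    _ ≤ ENNReal.ofReal ((f m.2 - f m.1) / β) := ENNReal.ofReal_le_ofReal hreal

lemma countable_left (W : Set ℝ) :
    {x : ℝ | x ∉ W ∧ ∃ δ : ℝ, 0 < δ ∧ Ioo (x - δ) x ⊆ W}.Countable := by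
  set s := {x : ℝ | x ∉ W ∧ ∃ δ : ℝ, 0 < δ ∧ Ioo (x - δ) x ⊆ W} with hs
  have h : ∀ x : ℝ, ∃ q : ℚ, x ∈ s →
      ∃ δ : ℝ, 0 < δ ∧ Ioo (x - δ) x ⊆ W ∧ x - δ < (q : ℝ) ∧ (q : ℝ) < x := by
    intro x
    by_cases hx : x ∈ s
    · obtain ⟨hxW, δ, hδ, hsub⟩ := hx
      obtain ⟨q, hq1, hq2⟩ := exists_rat_btwn (show x - δ < x by linarith)
      exact ⟨q, fun _ => ⟨δ, hδ, hsub, hq1, hq2⟩⟩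
    · exact ⟨0, fun h => absurd h hx⟩
  choose Q hQ using h
  have hinj : Set.InjOn Q s := by
    intro x hx y hy hxy
    by_contra hne
    rcases lt_trichotomy x y with hlt | heq | hlt
    · obtain ⟨δ, hδ, hsub, hq1, hq2⟩ := hQ y hy
      obtain ⟨δ', hδ', hsub', hq1', hq2'⟩ := hQ x hx
      rw [hxy] at hq2'
      exact hx.1 (hsub ⟨by linarith, hlt⟩)
    · exact hne heq
    · obtain ⟨δ, hδ, hsub, hq1, hq2⟩ := hQ x hx
      obtain ⟨δ', hδ', hsub', hq1', hq2'⟩ := hQ y hy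
      rw [← hxy] at hq2'
      exact hy.1 (hsub ⟨by linarith, hlt⟩)
  have : s.Countable := by
    rw [Set.countable_iff_exists_injOn]
    refine ⟨fun x => Encodable.encode (Q x), ?_⟩
    intro x hx y hy hxy
    exact hinj hx hy (Encodable.encode_injective hxy)
  exact this

lemma countable_right (W : Set ℝ) :
    {x : ℝ | x ∉ W ∧ ∃ δ : ℝ, 0 < δ ∧ Ioo x (x + δ) ⊆ W}.Countable := by
  set s := {x : ℝ | x ∉ W ∧ ∃ δ : ℝ, 0 < δ ∧ Ioo x (x + δ) ⊆ W} with hs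
  have h : ∀ x : ℝ, ∃ q : ℚ, x ∈ s →
      ∃ δ : ℝ, 0 < δ ∧ Ioo x (x + δ) ⊆ W ∧ x < (q : ℝ) ∧ (q : ℝ) < x + δ := by
    intro x
    by_cases hx : x ∈ s
    · obtain ⟨hxW, δ, hδ, hsub⟩ := hx
      obtain ⟨q, hq1, hq2⟩ := exists_rat_btwn (show x < x + δ by linarith)
      exact ⟨q, fun _ => ⟨δ, hδ, hsub, hq1, hq2⟩⟩
    · exact ⟨0, fun h => absurd h hx⟩
  choose Q hQ using h
  have hinj : Set.InjOn Q s := by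
    intro x hx y hy hxy
    by_contra hne
    rcases lt_trichotomy x y with hlt | heq | hlt
    · obtain ⟨δ, hδ, hsub, hq1, hq2⟩ := hQ x hx
      obtain ⟨δ', hδ', hsub', hq1', hq2'⟩ := hQ y hy
      rw [hxy] at hq2
      exact hy.1 (hsub ⟨hlt, by linarith⟩)
    · exact hne heq
    · obtain ⟨δ, hδ, hsub, hq1, hq2⟩ := hQ y hy
      obtain ⟨δ', hδ', hsub', hq1', hq2'⟩ := hQ x hx
      rw [← hxy] at hq2
      exact hx.1 (hsub ⟨hlt, by linarith⟩)
  rw [Set.countable_iff_exists_injOn]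
  exact ⟨fun x => Encodable.encode (Q x), fun x hx y hy hxy =>
    hinj hx hy (Encodable.encode_injective hxy)⟩

lemma fin_bound (f : ℝ → ℝ) (hf : MonotoneOn f (Set.Icc 0 1)) {β γ : ℝ}
    (hβ : 0 < β) (hγ : 0 ≤ γ)
    (J E' : Set (ℝ × ℝ))
    (hJ1 : ∀ p ∈ J, 0 ≤ p.1 ∧ p.1 < p.2 ∧ p.2 ≤ 1)
    (hJd : ∀ p ∈ J, ∀ q ∈ J, Icc p.1 p.2 ⊆ Icc q.1 q.2 ∨ Icc q.1 q.2 ⊆ Icc p.1 p.2 ∨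
      Disjoint (Ioo p.1 p.2) (Ioo q.1 q.2))
    (hJβ : ∀ p ∈ J, β * (p.2 - p.1) < f p.2 - f p.1)
    (hE1 : ∀ q ∈ E', 0 ≤ q.1 ∧ q.1 < q.2 ∧ q.2 ≤ 1)
    (hEd : ∀ p ∈ E', ∀ q ∈ E', Icc p.1 p.2 ⊆ Icc q.1 q.2 ∨ Icc q.1 q.2 ⊆ Icc p.1 p.2 ∨
      Disjoint (Ioo p.1 p.2) (Ioo q.1 q.2))
    (hEγ : ∀ q ∈ E', f q.2 - f q.1 < γ * (q.2 - q.1))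
    (hcov : ∀ p ∈ J, ∃ q ∈ E', Icc p.1 p.2 ⊆ Icc q.1 q.2)
    (T : Set ℝ) (hT : ∀ q ∈ E', Icc q.1 q.2 ⊆ T)
    (F : Finset (ℝ × ℝ)) (hF : ↑F ⊆ J) :
    volume (⋃ p ∈ F, Icc p.1 p.2) ≤ ENNReal.ofReal (γ / β) * volume T := by
  have hcov' : ∀ p : ℝ × ℝ, ∃ q : ℝ × ℝ, p ∈ J → q ∈ E' ∧ Icc p.1 p.2 ⊆ Icc q.1 q.2 := by
    intro p
    by_cases hp : p ∈ J
    · obtain ⟨q, hq1, hq2⟩ := hcov p hp; exact ⟨q, fun _ => ⟨hq1, hq2⟩⟩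
    · exact ⟨p, fun h => absurd h hp⟩
  choose φ hφ using hcov'
  set G := F.image φ with hG
  have hGE : ∀ q ∈ G, q ∈ E' := by
    intro q hq
    rw [hG, Finset.mem_image] at hq
    obtain ⟨p, hp, rfl⟩ := hq
    exact (hφ p (hF hp)).1
  have hGlt : ∀ q ∈ G, q.1 < q.2 := fun q hq => (hE1 q (hGE q hq)).2.1
  set M := G.filter (fun mm => ∀ r ∈ G, Icc mm.1 mm.2 ⊆ Icc r.1 r.2 → r = mm) with hM
  have hMG : M ⊆ G := Finset.filter_subset _ _
  have hcover : (⋃ p ∈ F, Icc p.1 p.2) ⊆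
      ⋃ m ∈ M, ⋃ p ∈ F.filter (fun p => Icc p.1 p.2 ⊆ Icc m.1 m.2), Icc p.1 p.2 := by
    intro x hx
    simp only [mem_iUnion, exists_prop] at hx ⊢
    obtain ⟨p, hp, hx⟩ := hx
    have hpJ := hF hp
    obtain ⟨hq1, hq2⟩ := hφ p hpJ
    have hqG : φ p ∈ G := Finset.mem_image_of_mem _ hp
    obtain ⟨m, hm, hsub, hmax⟩ := exists_maximal_above G hGlt hqG
    refine ⟨m, ?_, p, ?_, hx⟩
    · rw [hM, Finset.mem_filter]; exact ⟨hm, hmax⟩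
    · rw [Finset.mem_filter]; exact ⟨hp, hq2.trans hsub⟩
  have hMd : ∀ m ∈ M, ∀ m' ∈ M, m ≠ m' → Disjoint (Ioo m.1 m.2) (Ioo m'.1 m'.2) := by
    intro m hm m' hm' hne
    have hmm := (Finset.mem_filter.1 hm).2
    have hmm' := (Finset.mem_filter.1 hm').2
    rcases hEd m (hGE m (hMG hm)) m' (hGE m' (hMG hm')) with h | h | h
    · exact absurd (hmm m' (hMG hm') h) (fun e => hne e.symm)
    · exact absurd (hmm' m (hMG hm) h) hne
    · exact h
  calc volume (⋃ p ∈ F, Icc p.1 p.2)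
      ≤ ∑ m ∈ M, volume (⋃ p ∈ F.filter (fun p => Icc p.1 p.2 ⊆ Icc m.1 m.2), Icc p.1 p.2) :=
        (measure_mono hcover).trans (measure_biUnion_finset_le _ _)
    _ ≤ ∑ m ∈ M, ENNReal.ofReal (γ / β * (m.2 - m.1)) := by
        refine Finset.sum_le_sum fun m hm => ?_
        have hmE := hGE m (hMG hm)
        obtain ⟨hm1, hm2, hm3⟩ := hE1 m hmE
        have step1 : volume (⋃ p ∈ F.filter (fun p => Icc p.1 p.2 ⊆ Icc m.1 m.2), Icc p.1 p.2)
            ≤ ENNReal.ofReal ((f m.2 - f m.1) / β) := by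
          refine within_bound f hf hβ _ hm1 hm2 hm3 ?_ ?_ ?_
          · intro p hp
            obtain ⟨hpF, hpsub⟩ := Finset.mem_filter.1 hp
            have := (hJ1 p (hF hpF)).2.1
            rw [Set.Icc_subset_Icc_iff this.le] at hpsub
            exact ⟨hpsub.1, this, hpsub.2⟩
          · intro p hp q hq
            exact hJd p (hF (Finset.mem_filter.1 hp).1) q (hF (Finset.mem_filter.1 hq).1)
          · intro p hp
            exact hJβ p (hF (Finset.mem_filter.1 hp).1)
        refine step1.trans (ENNReal.ofReal_le_ofReal ?_)
        rw [div_le_iff₀ hβ]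
        have h1 := hEγ m hmE
        have h2 : γ / β * (m.2 - m.1) * β = γ * (m.2 - m.1) := by field_simp
        linarith
    _ = ENNReal.ofReal (γ / β) * ∑ m ∈ M, volume (Ioo m.1 m.2) := by
        rw [Finset.mul_sum]
        refine Finset.sum_congr rfl fun m hm => ?_
        rw [Real.volume_Ioo, ← ENNReal.ofReal_mul (by positivity)]
    _ = ENNReal.ofReal (γ / β) * volume (⋃ m ∈ M, Ioo m.1 m.2) := by
        rw [measure_biUnion_finset ?_ (fun m _ => measurableSet_Ioo)]
        intro m hm m' hm' hne
        exact hMd m hm m' hm' hne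
    _ ≤ ENNReal.ofReal (γ / β) * volume T := by
        refine mul_le_mul_right (measure_mono ?_) _
        refine Set.iUnion₂_subset fun m hm => ?_
        exact (Set.Ioo_subset_Icc_self).trans (hT m (hGE m (hMG hm)))

lemma step (f : ℝ → ℝ) (hf : MonotoneOn f (Set.Icc 0 1)) {β γ : ℝ}
    (hβ : 0 < β) (hγ : 0 ≤ γ)
    (J E' : Set (ℝ × ℝ))
    (hJ1 : ∀ p ∈ J, 0 ≤ p.1 ∧ p.1 < p.2 ∧ p.2 ≤ 1)
    (hJd : ∀ p ∈ J, ∀ q ∈ J, Icc p.1 p.2 ⊆ Icc q.1 q.2 ∨ Icc q.1 q.2 ⊆ Icc p.1 p.2 ∨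
      Disjoint (Ioo p.1 p.2) (Ioo q.1 q.2))
    (hJβ : ∀ p ∈ J, β * (p.2 - p.1) < f p.2 - f p.1)
    (hE1 : ∀ q ∈ E', 0 ≤ q.1 ∧ q.1 < q.2 ∧ q.2 ≤ 1)
    (hEd : ∀ p ∈ E', ∀ q ∈ E', Icc p.1 p.2 ⊆ Icc q.1 q.2 ∨ Icc q.1 q.2 ⊆ Icc p.1 p.2 ∨
      Disjoint (Ioo p.1 p.2) (Ioo q.1 q.2))
    (hEγ : ∀ q ∈ E', f q.2 - f q.1 < γ * (q.2 - q.1))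
    (hcov : ∀ p ∈ J, ∃ q ∈ E', Icc p.1 p.2 ⊆ Icc q.1 q.2)
    (T : Set ℝ) (hT : ∀ q ∈ E', Icc q.1 q.2 ⊆ T) :
    volume (⋃ p ∈ J, Icc p.1 p.2) ≤ ENNReal.ofReal (γ / β) * volume T := by
  set W := ⋃ p ∈ J, Ioo p.1 p.2 with hW
  have hWopen : IsOpen W := isOpen_biUnion fun p _ => isOpen_Ioo
  set Dl := {x : ℝ | x ∉ W ∧ ∃ δ : ℝ, 0 < δ ∧ Ioo (x - δ) x ⊆ W} with hDl
  set Dr := {x : ℝ | x ∉ W ∧ ∃ δ : ℝ, 0 < δ ∧ Ioo x (x + δ) ⊆ W} with hDr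
  have hsub : (⋃ p ∈ J, Icc p.1 p.2) ⊆ W ∪ (Dl ∪ Dr) := by
    intro x hx
    simp only [mem_iUnion, exists_prop] at hx
    obtain ⟨p, hp, hx1, hx2⟩ := hx
    have hplt := (hJ1 p hp).2.1
    by_cases hxW : x ∈ W
    · exact Or.inl hxW
    · right
      have hIoo : Ioo p.1 p.2 ⊆ W := by
        intro y hy
        rw [hW]
        exact mem_biUnion hp hy
      rcases eq_or_lt_of_le hx1 with heq | hlt1
      · -- x = p.1
        right
        refine ⟨hxW, p.2 - p.1, by linarith, ?_⟩
        intro y hy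
        obtain ⟨hy1, hy2⟩ := hy
        exact hIoo ⟨by linarith, by linarith⟩
      · rcases eq_or_lt_of_le hx2 with heq | hlt2
        · -- x = p.2
          left
          refine ⟨hxW, p.2 - p.1, by linarith, ?_⟩
          intro y hy
          obtain ⟨hy1, hy2⟩ := hy
          exact hIoo ⟨by linarith, by linarith⟩
        · exact absurd (hIoo ⟨hlt1, hlt2⟩) hxW
  have hDvol : volume (Dl ∪ Dr) = 0 := by
    refine measure_union_null ?_ ?_
    · exact ((countable_left W).mono (by rw [hDl])).measure_zero _
    · exact ((countable_right W).mono (by rw [hDr])).measure_zero _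
  have hWvol : volume W ≤ ENNReal.ofReal (γ / β) * volume T := by
    rw [hWopen.measure_eq_iSup_isCompact]
    refine iSup_le fun K => iSup_le fun hKW => iSup_le fun hK => ?_
    have hKcov : K ⊆ ⋃ p : J, Ioo (p : ℝ × ℝ).1 (p : ℝ × ℝ).2 := by
      refine hKW.trans ?_
      rw [hW, Set.biUnion_eq_iUnion]
    obtain ⟨t, ht⟩ := hK.elim_finite_subcover (fun p : J => Ioo (p : ℝ × ℝ).1 (p : ℝ × ℝ).2)
      (fun _ => isOpen_Ioo) hKcov
    set F := t.image (fun p : J => (p : ℝ × ℝ)) with hF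
    have hFJ : ↑F ⊆ J := by
      intro p hp
      rw [hF] at hp
      simp only [Finset.coe_image, Set.mem_image] at hp
      obtain ⟨q, _, rfl⟩ := hp
      exact q.2
    have hKF : K ⊆ ⋃ p ∈ F, Icc p.1 p.2 := by
      refine ht.trans ?_
      intro y hy
      simp only [mem_iUnion, exists_prop] at hy ⊢
      obtain ⟨q, hq, hy⟩ := hy
      exact ⟨q, by rw [hF]; exact Finset.mem_image_of_mem _ hq, Ioo_subset_Icc_self hy⟩
    exact (measure_mono hKF).trans
      (fin_bound f hf hβ hγ J E' hJ1 hJd hJβ hE1 hEd hEγ hcov T hT F hFJ)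
  calc volume (⋃ p ∈ J, Icc p.1 p.2) ≤ volume (W ∪ (Dl ∪ Dr)) := measure_mono hsub
    _ ≤ volume W + volume (Dl ∪ Dr) := measure_union_le _ _
    _ = volume W := by rw [hDvol, add_zero]
    _ ≤ ENNReal.ofReal (γ / β) * volume T := hWvol

/-- The chain condition. -/
def CC (f : ℝ → ℝ) (γ β : ℝ) (E O : Set (ℝ × ℝ)) (N : ℕ) (A : ℕ → ℝ × ℝ) : Prop :=
  (∀ i < 2 * N, Set.Icc (A (i+1)).1 (A (i+1)).2 ⊆ Set.Icc (A i).1 (A i).2) ∧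
  (∀ i ≤ N, A (2 * i) ∈ E ∧ slopeOf f (A (2 * i)) < γ) ∧
  (∀ i < N, A (2 * i + 1) ∈ O ∧ β < slopeOf f (A (2 * i + 1)))

def SS (f : ℝ → ℝ) (γ β : ℝ) (E O : Set (ℝ × ℝ)) (N : ℕ) : Set ℝ :=
  {x : ℝ | ∃ A : ℕ → ℝ × ℝ, CC f γ β E O N A ∧ x ∈ Set.Icc (A (2 * N)).1 (A (2 * N)).2}

lemma main (f : ℝ → ℝ) (hf : MonotoneOn f (Set.Icc 0 1))
    (γ β : ℝ) (hγ : 0 < γ) (hγβ : γ < β)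
    (E O : Set (ℝ × ℝ))
    (hE : ∀ p ∈ E, 0 ≤ p.1 ∧ p.1 < p.2 ∧ p.2 ≤ 1)
    (hO : ∀ p ∈ O, 0 ≤ p.1 ∧ p.1 < p.2 ∧ p.2 ≤ 1)
    (hEd : ∀ p ∈ E, ∀ q ∈ E, Set.Icc p.1 p.2 ⊆ Set.Icc q.1 q.2 ∨
      Set.Icc q.1 q.2 ⊆ Set.Icc p.1 p.2 ∨ Disjoint (Set.Ioo p.1 p.2) (Set.Ioo q.1 q.2))
    (hOd : ∀ p ∈ O, ∀ q ∈ O, Set.Icc p.1 p.2 ⊆ Set.Icc q.1 q.2 ∨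
      Set.Icc q.1 q.2 ⊆ Set.Icc p.1 p.2 ∨ Disjoint (Set.Ioo p.1 p.2) (Set.Ioo q.1 q.2)) :
    ∀ N : ℕ, volume (SS f γ β E O N) ≤ ENNReal.ofReal ((γ / β) ^ N) := by
  have hβ : 0 < β := hγ.trans hγβ
  intro N
  induction N with
  | zero =>
    have hsub : SS f γ β E O 0 ⊆ Icc (0 : ℝ) 1 := by
      rintro x ⟨A, hA, hx⟩
      have h0 := (hA.2.1 0 (le_refl 0)).1
      have := hE _ h0
      exact ⟨le_trans this.1 hx.1, le_trans hx.2 this.2.2⟩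
    refine (measure_mono hsub).trans ?_
    simp [Real.volume_Icc]
  | succ n ih =>
    set Jset := {p : ℝ × ℝ | ∃ A, CC f γ β E O (n+1) A ∧ p = A (2*n+1)} with hJset
    set Eset := {q : ℝ × ℝ | ∃ A, CC f γ β E O (n+1) A ∧ q = A (2*n)} with hEset
    have hJO : ∀ p ∈ Jset, p ∈ O ∧ β < slopeOf f p := by
      rintro p ⟨A, hA, rfl⟩
      exact hA.2.2 n (by omega)
    have hEE : ∀ q ∈ Eset, q ∈ E ∧ slopeOf f q < γ := by
      rintro q ⟨A, hA, rfl⟩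
      exact hA.2.1 n (by omega)
    have h1 : ∀ p ∈ Jset, 0 ≤ p.1 ∧ p.1 < p.2 ∧ p.2 ≤ 1 := fun p hp => hO p (hJO p hp).1
    have h2 : ∀ p ∈ Jset, ∀ q ∈ Jset, Icc p.1 p.2 ⊆ Icc q.1 q.2 ∨
        Icc q.1 q.2 ⊆ Icc p.1 p.2 ∨ Disjoint (Ioo p.1 p.2) (Ioo q.1 q.2) :=
      fun p hp q hq => hOd p (hJO p hp).1 q (hJO q hq).1
    have h3 : ∀ p ∈ Jset, β * (p.2 - p.1) < f p.2 - f p.1 := by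
      intro p hp
      have hlen : 0 < p.2 - p.1 := by have := (h1 p hp).2.1; linarith
      have := (hJO p hp).2
      rw [slopeOf, lt_div_iff₀ hlen] at this
      linarith [this]
    have h4 : ∀ q ∈ Eset, 0 ≤ q.1 ∧ q.1 < q.2 ∧ q.2 ≤ 1 := fun q hq => hE q (hEE q hq).1
    have h5 : ∀ p ∈ Eset, ∀ q ∈ Eset, Icc p.1 p.2 ⊆ Icc q.1 q.2 ∨
        Icc q.1 q.2 ⊆ Icc p.1 p.2 ∨ Disjoint (Ioo p.1 p.2) (Ioo q.1 q.2) :=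
      fun p hp q hq => hEd p (hEE p hp).1 q (hEE q hq).1
    have h6 : ∀ q ∈ Eset, f q.2 - f q.1 < γ * (q.2 - q.1) := by
      intro q hq
      have hlen : 0 < q.2 - q.1 := by have := (h4 q hq).2.1; linarith
      have := (hEE q hq).2
      rw [slopeOf, div_lt_iff₀ hlen] at this
      linarith [this]
    have h7 : ∀ p ∈ Jset, ∃ q ∈ Eset, Icc p.1 p.2 ⊆ Icc q.1 q.2 := by
      rintro p ⟨A, hA, rfl⟩
      exact ⟨A (2*n), ⟨A, hA, rfl⟩, hA.1 (2*n) (by omega)⟩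
    have h8 : ∀ q ∈ Eset, Icc q.1 q.2 ⊆ SS f γ β E O n := by
      rintro q ⟨A, hA, rfl⟩ x hx
      exact ⟨A, ⟨fun i hi => hA.1 i (by omega), fun i hi => hA.2.1 i (by omega),
        fun i hi => hA.2.2 i (by omega)⟩, hx⟩
    have hsub : SS f γ β E O (n+1) ⊆ ⋃ p ∈ Jset, Icc p.1 p.2 := by
      rintro x ⟨A, hA, hx⟩
      have hs : Icc (A (2*n+1+1)).1 (A (2*n+1+1)).2 ⊆ Icc (A (2*n+1)).1 (A (2*n+1)).2 :=
        hA.1 (2*n+1) (by omega)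
      have hx' : x ∈ Icc (A (2*n+1+1)).1 (A (2*n+1+1)).2 := by
        have he : 2 * (n+1) = 2*n+1+1 := by ring
        rw [he] at hx; exact hx
      exact mem_biUnion ⟨A, hA, rfl⟩ (hs hx')
    calc volume (SS f γ β E O (n+1)) ≤ volume (⋃ p ∈ Jset, Icc p.1 p.2) := measure_mono hsub
      _ ≤ ENNReal.ofReal (γ / β) * volume (SS f γ β E O n) :=
          step f hf hβ hγ.le Jset Eset h1 h2 h3 h4 h5 h6 h7 _ h8
      _ ≤ ENNReal.ofReal (γ / β) * ENNReal.ofReal ((γ / β) ^ n) := mul_le_mul_right ih _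
      _ = ENNReal.ofReal ((γ / β) ^ (n+1)) := by
          rw [pow_succ, ENNReal.ofReal_mul (by positivity), mul_comm]

end Stmt14Aux

theorem stmt14 (f : ℝ → ℝ) (hf : MonotoneOn f (Set.Icc 0 1))
    (γ β : ℚ) (hγ : 0 < γ) (hγβ : γ < β) (n : ℕ)
    (E O : Set (ℝ × ℝ))
    (hE : ∀ p ∈ E, 0 ≤ p.1 ∧ p.1 < p.2 ∧ p.2 ≤ 1)
    (hO : ∀ p ∈ O, 0 ≤ p.1 ∧ p.1 < p.2 ∧ p.2 ≤ 1)
    -- within each class, any two intervals are nested or have disjoint interiors: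
    (hEd : ∀ p ∈ E, ∀ q ∈ E, Set.Icc p.1 p.2 ⊆ Set.Icc q.1 q.2 ∨
      Set.Icc q.1 q.2 ⊆ Set.Icc p.1 p.2 ∨ Disjoint (Set.Ioo p.1 p.2) (Set.Ioo q.1 q.2))
    (hOd : ∀ p ∈ O, ∀ q ∈ O, Set.Icc p.1 p.2 ⊆ Set.Icc q.1 q.2 ∨
      Set.Icc q.1 q.2 ⊆ Set.Icc p.1 p.2 ∨ Disjoint (Set.Ioo p.1 p.2) (Set.Ioo q.1 q.2)) :
    MeasureTheory.volume {x : ℝ | ∃ A : ℕ → ℝ × ℝ,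
      (∀ i < 2 * n, Set.Icc (A (i+1)).1 (A (i+1)).2 ⊆ Set.Icc (A i).1 (A i).2) ∧
      (∀ i ≤ n, A (2 * i) ∈ E ∧ slopeOf f (A (2 * i)) < (γ:ℝ)) ∧
      (∀ i < n, A (2 * i + 1) ∈ O ∧ (β:ℝ) < slopeOf f (A (2 * i + 1))) ∧
      x ∈ Set.Icc (A (2 * n)).1 (A (2 * n)).2}
      ≤ ENNReal.ofReal (((γ:ℝ) / (β:ℝ)) ^ n) := by
  have h := Stmt14Aux.main f hf (γ:ℝ) (β:ℝ) (by exact_mod_cast hγ) (by exact_mod_cast hγβ)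
    E O hE hO hEd hOd n
  refine le_trans (le_of_eq ?_) h
  congr 1
  ext x
  simp only [Stmt14Aux.SS, Stmt14Aux.CC, Set.mem_setOf_eq]
  constructor
  · rintro ⟨A, h1, h2, h3, h4⟩; exact ⟨A, ⟨h1, h2, h3⟩, h4⟩
  · rintro ⟨A, ⟨h1, h2, h3⟩, h4⟩; exact ⟨A, h1, h2, h3, h4⟩
end
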